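/- If a free filter F on ℕ is super-diagonal, then F is block-respecting: for every F-stationary set H and every partition of H into finite sets {D_k}, there is an F-stationary set J ⊆ H meeting each D_k in at most one point. -/
import Mathlib


/-- A filter on ℕ, as a family of subsets: nonempty (contains `univ`), not containing `∅`,
closed under finite intersections and supersets. -/
def IsSetFilter (F : Set (Set ℕ)) : Prop :=
  Set.univ ∈ F ∧ ∅ ∉ F ∧ (∀ A ∈ F, ∀ B ∈ F, A ∩ B ∈ F) ∧ ∀ A ∈ F, ∀ B : Set ℕ, A ⊆ B → B ∈ F

/-- A filter is free if its dual ideal contains all finite sets, i.e. the complement of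
every finite set belongs to the filter. -/
def IsFreeSetFilter (F : Set (Set ℕ)) : Prop :=
  IsSetFilter F ∧ ∀ S : Set ℕ, S.Finite → Sᶜ ∈ F

/-- `H` is `F`-stationary iff it does not belong to the dual ideal of `F`,
i.e. `Hᶜ ∉ F`. -/
def FStationary (F : Set (Set ℕ)) (H : Set ℕ) : Prop := Hᶜ ∉ F

/-- The dual ideal of `F` is countably generated by the partition `A` of ℕ into
pairwise disjoint nonempty sets: it consists exactly of the finite unions of subsets
of the sets `A k`. -/
def CountablyGeneratedBy (F : Set (Set ℕ)) (A : ℕ → Set ℕ) : Prop :=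
  (∀ k, (A k).Nonempty) ∧ Pairwise (Function.onFun Disjoint A) ∧ (⋃ k, A k) = Set.univ ∧
    ∀ S : Set ℕ, Sᶜ ∈ F ↔ ∃ T : Finset ℕ, ∃ B : ℕ → Set ℕ,
      (∀ k ∈ T, B k ⊆ A k) ∧ S = ⋃ k ∈ T, B k

/-- `F` is super-diagonal: every stationary set has a stationary subset all of whose
infinite subsets are stationary. -/
def SuperDiagonal (F : Set (Set ℕ)) : Prop :=
  ∀ I : Set ℕ, FStationary F I →
    ∃ J ⊆ I, FStationary F J ∧ ∀ K ⊆ J, K.Infinite → FStationary F K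

/-- `F` is diagonal: for every sequence `(A n)` of members of `F` and every stationary
set `I` there exists a stationary `J ⊆ I` with `J \ A n` finite for all `n`. -/
def DiagonalFilter (F : Set (Set ℕ)) : Prop :=
  ∀ A : ℕ → Set ℕ, (∀ n, A n ∈ F) → ∀ I : Set ℕ, FStationary F I →
    ∃ J ⊆ I, FStationary F J ∧ ∀ n, (J \ A n).Finite

/-- `F` is block-respecting: for every stationary set `H` and every partition `(D k)`
of `H` into finite sets, there is a stationary `J ⊆ H` with `|J ∩ D k| ≤ 1` for all `k`. -/
def BlockRespecting (F : Set (Set ℕ)) : Prop :=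
  ∀ H : Set ℕ, FStationary F H → ∀ D : ℕ → Set ℕ, (∀ k, (D k).Finite) →
    Pairwise (Function.onFun Disjoint D) → (⋃ k, D k) = H →
    ∃ J ⊆ H, FStationary F J ∧ ∀ k, (J ∩ D k).Subsingleton

/-- a super-diagonal free filter is block-respecting. -/
theorem stmt4 (F : Set (Set ℕ)) (hF : IsFreeSetFilter F) (hsd : SuperDiagonal F) :
    BlockRespecting F := by
  intro H hH D hDfin hDdisj hDunion
  obtain ⟨J, hJH, hJstat, hJsub⟩ := hsd H hH
  have hJinf : J.Infinite := fun hfin => hJstat (hF.2 J hfin)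
  set J' : Set ℕ := {n | ∃ k, (J ∩ D k).Nonempty ∧ n = sInf (J ∩ D k)} with hJ'def
  have hJ'J : J' ⊆ J := by
    rintro n ⟨k, hne, rfl⟩
    exact (Nat.sInf_mem hne).1
  -- key: an element of J' lying in D k is the sInf of J ∩ D k
  have hkey : ∀ n ∈ J', ∀ k, n ∈ D k → n = sInf (J ∩ D k) := by
    rintro n ⟨j, hne, rfl⟩ k hk
    have hj : j = k := by
      by_contra hjk
      have hd := hDdisj hjk
      exact (Set.disjoint_left.mp hd (Nat.sInf_mem hne).2) hk
    rw [hj]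
  have hsub : ∀ k, (J' ∩ D k).Subsingleton := by
    intro k a ha b hb
    rw [hkey a ha.1 k ha.2, hkey b hb.1 k hb.2]
  have hJ'inf : J'.Infinite := by
    intro hfin
    have hKfin : {k | (J ∩ D k).Nonempty}.Finite := by
      apply Set.Finite.of_finite_image (f := fun k => sInf (J ∩ D k))
      · apply hfin.subset
        rintro n ⟨k, hk, rfl⟩
        exact ⟨k, hk, rfl⟩
      · intro k₁ h₁ k₂ h₂ heq
        by_contra hne
        have hd := hDdisj hne
        have m₁ := (Nat.sInf_mem h₁).2
        have m₂ := (Nat.sInf_mem h₂).2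
        have heq' : sInf (J ∩ D k₁) = sInf (J ∩ D k₂) := heq
        rw [heq'] at m₁
        exact (Set.disjoint_left.mp hd m₁) m₂
    have hJfin : J.Finite := by
      apply (hKfin.biUnion (fun k _ => (hDfin k).inter_of_right J)).subset
      intro n hn
      have : n ∈ ⋃ k, D k := hDunion ▸ hJH hn
      obtain ⟨k, hk⟩ := Set.mem_iUnion.mp this
      exact Set.mem_biUnion ⟨n, hn, hk⟩ ⟨hn, hk⟩
    exact hJinf hJfin
  exact ⟨J', hJ'J.trans hJH, hJsub J' hJ'J hJ'inf, hsub⟩
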